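/- For every feasible caching vector U (i.e., U i > 0 for all i and ∑ i, U i = V), the maximal per-file call ratio satisfies (⨆ i, W i / U i) ≥ (∑ j, W j) / V; equivalently, there exists an index i with W i / U i ≥ (∑ j, W j) / V. -/
import Mathlib


/-- Theorem 2 (lower bound part): for every feasible caching vector `U`,
the maximal per-file call ratio `F₂(U) = ⨆ i, W i / U i` is at least
`(∑ j, W j) / V`; equivalently, some index `i` has `W i / U i ≥ (∑ j, W j) / V`. -/
theorem caching_F2_lower_bound (H : ℕ) (hH : 0 < H)
    (W : Fin H → ℝ) (hW : ∀ i, 0 < W i)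
    (V : ℝ) (hV : 0 < V)
    (U : Fin H → ℝ) (hU : ∀ i, 0 < U i) (hsum : ∑ i, U i = V) :
    (⨆ i, W i / U i) ≥ (∑ j, W j) / V ∧
    ∃ i, W i / U i ≥ (∑ j, W j) / V := by
  have hne : Nonempty (Fin H) := ⟨⟨0, hH⟩⟩
  have hex : ∃ i, W i / U i ≥ (∑ j, W j) / V := by
    by_contra h
    push_neg at h
    have hlt : ∀ i, W i < ((∑ j, W j) / V) * U i := by
      intro i
      have := h i
      rw [div_lt_iff₀ (hU i)] at this
      linarith
    have hsumlt : (∑ j, W j) < ∑ i, ((∑ j, W j) / V) * U i :=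
      Finset.sum_lt_sum_of_nonempty (Finset.univ_nonempty) (fun i _ => hlt i)
    rw [← Finset.mul_sum, hsum, div_mul_cancel₀ _ hV.ne'] at hsumlt
    exact lt_irrefl _ hsumlt
  refine ⟨?_, hex⟩
  obtain ⟨i, hi⟩ := hex
  have hbdd : BddAbove (Set.range fun i => W i / U i) :=
    Set.Finite.bddAbove (Set.finite_range _)
  exact le_trans hi (le_ciSup hbdd i)
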